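/- (Theorem 2, part (i): characterization of M^{∘,0}.) Let S be a martingale with S_0 = 0 and let τ* be the first optimal stopping time. Then M := M* − S belongs to M^{∘,0} if and only if, almost surely: (dd1) max_{0 ≤ r < j} ( Z_r − Y*_r − S_j + S_r ) ≤ 0 on the event { j ≤ τ* } for every 0 ≤ j ≤ J, and (dd2) S_j − S_{τ*} ≤ Y*_j − Z_j + A*_j on the event { τ* < j } for every 0 ≤ j ≤ J (where A*_j = 0 for all 0 ≤ j ≤ τ*). -/

import Mathlib

open MeasureTheory Finset

private lemma sm_sup_aux {Ω : Type*} (m : MeasurableSpace Ω) {f g : Ω → ℝ}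
    (hf : StronglyMeasurable[m] f) (hg : StronglyMeasurable[m] g) :
    StronglyMeasurable[m] (f ⊔ g) := by
  letI := m
  exact hf.sup hg

/-- **Theorem 2, part (i): characterization of `M^{∘,0}`.** Let `S` be a martingale with
`S 0 = 0`, let `τ⋆` be the first optimal stopping time, and set `M := M⋆ − S`. Then `M` is
weakly optimal at `0` if and only if, almost surely:
(dd1) `max_{0 ≤ r < j} (Z r − Y r − S j + S r) ≤ 0` on the event `{j ≤ τ⋆}` for every
`0 ≤ j ≤ J`, and
(dd2) `S j − S τ⋆ ≤ Y j − Z j + A⋆ j` on the event `{τ⋆ < j}` for every `0 ≤ j ≤ J`. -/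
theorem mem_weakly_optimal_at_zero_iff
    {Ω : Type*} {mΩ : MeasurableSpace Ω} {μ : Measure Ω} [IsProbabilityMeasure μ]
    (J : ℕ) (ℱ : Filtration ℕ mΩ)
    (Z Y Mstar Astar : ℕ → Ω → ℝ)
    (hZ_adapted : Adapted ℱ Z)
    (hZ_int : ∀ j, Integrable (Z j) μ)
    (hYJ : ∀ ω, Y J ω = Z J ω)
    (hY : ∀ j, j < J → ∀ ω, Y j ω = max (Z j ω) ((μ[Y (j + 1) | ℱ j]) ω))
    (hMstar : ∀ j ω, Mstar j ω =
      ∑ l ∈ Finset.range j, (Y (l + 1) ω - (μ[Y (l + 1) | ℱ l]) ω))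
    (hAstar : ∀ j ω, Astar j ω =
      ∑ l ∈ Finset.range j, (Y l ω - (μ[Y (l + 1) | ℱ l]) ω))
    -- the continuation value `C i = E[Y (i+1) | ℱ i]`, with the convention `Y (J+1) := 0`
    (C : ℕ → Ω → ℝ)
    (hC : ∀ i, i < J → C i = μ[Y (i + 1) | ℱ i])
    (hCJ : ∀ ω, C J ω = 0)
    -- the first optimal stopping time `τ⋆ = inf{ i ≥ 0 : Z i ≥ E[Y (i+1) | ℱ i] }`
    (τs : Ω → ℕ)
    (hτs : ∀ ω, τs ω ≤ J ∧ C (τs ω) ω ≤ Z (τs ω) ω ∧ ∀ i, i < τs ω → Z i ω < C i ω)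
    -- the martingale shift `S` and the shifted Doob martingale `M = M⋆ − S`
    (S M : ℕ → Ω → ℝ)
    (hS : Martingale S ℱ μ)
    (hS0 : ∀ ω, S 0 ω = 0)
    (hMdef : ∀ j ω, M j ω = Mstar j ω - S j ω) :
    (Y 0 =ᵐ[μ] μ[fun ω => (Finset.Icc 0 J).sup' (Finset.nonempty_Icc.mpr (Nat.zero_le J))
        (fun r => Z r ω - M r ω) | ℱ 0])
    ↔
    (∀ᵐ ω ∂μ,
      (∀ j, j ≤ J → j ≤ τs ω → ∀ r, r < j → Z r ω - Y r ω - S j ω + S r ω ≤ 0)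
      ∧ (∀ j, j ≤ J → τs ω < j → S j ω - S (τs ω) ω ≤ Y j ω - Z j ω + Astar j ω)) := by
  classical
  have hne : (Finset.Icc 0 J).Nonempty := Finset.nonempty_Icc.mpr (Nat.zero_le J)
  have hτ_le : ∀ ω, τs ω ≤ J := fun ω => (hτs ω).1
  -- measurability and integrability of the Snell envelope
  have key : ∀ d : ℕ, StronglyMeasurable[ℱ (J - d)] (Y (J - d)) ∧ Integrable (Y (J - d)) μ := by
    intro d
    induction d with
    | zero =>
      have hYJ' : Y J = Z J := funext hYJ
      simpa [hYJ'] using And.intro (hZ_adapted J).stronglyMeasurable (hZ_int J)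
    | succ d ih =>
      by_cases hdJ : J ≤ d
      · rw [Nat.sub_eq_zero_of_le (le_trans hdJ (Nat.le_succ d))]
        rw [Nat.sub_eq_zero_of_le hdJ] at ih
        exact ih
      · push_neg at hdJ
        have hjJ : J - (d + 1) < J := by omega
        have hYj : Y (J - (d + 1)) =
            (Z (J - (d + 1))) ⊔ (μ[Y (J - (d + 1) + 1) | ℱ (J - (d + 1))]) :=
          funext (hY _ hjJ)
        constructor
        · rw [hYj]
          exact sm_sup_aux _ (hZ_adapted _).stronglyMeasurable stronglyMeasurable_condExp
        · rw [hYj]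
          exact (hZ_int _).sup integrable_condExp
  have hYm : ∀ j, j ≤ J → StronglyMeasurable[ℱ j] (Y j) := by
    intro j hj
    have := (key (J - j)).1
    rwa [Nat.sub_sub_self hj] at this
  have hYi : ∀ j, j ≤ J → Integrable (Y j) μ := by
    intro j hj
    have := (key (J - j)).2
    rwa [Nat.sub_sub_self hj] at this
  -- measurability of the continuation value
  have hCm : ∀ i, i ≤ J → StronglyMeasurable[ℱ i] (C i) := by
    intro i hi
    rcases lt_or_eq_of_le hi with h | h
    · rw [hC i h]; exact stronglyMeasurable_condExp
    · subst h
      have : C i = fun _ => (0 : ℝ) := funext hCJ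
      rw [this]; exact stronglyMeasurable_const
  -- Doob decomposition (pointwise)
  have hDoob : ∀ j ω, Mstar j ω - Astar j ω = Y j ω - Y 0 ω := by
    intro j ω
    rw [hMstar, hAstar, ← Finset.sum_sub_distrib]
    have : ∀ l ∈ Finset.range j,
        (Y (l + 1) ω - (μ[Y (l + 1) | ℱ l]) ω) - (Y l ω - (μ[Y (l + 1) | ℱ l]) ω)
          = Y (l + 1) ω - Y l ω := by intro l _; ring
    rw [Finset.sum_congr rfl this, Finset.sum_range_sub (fun l => Y l ω)]
  -- `A⋆` vanishes up to `τ⋆`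
  have hAτ : ∀ ω r, r ≤ τs ω → Astar r ω = 0 := by
    intro ω r hr
    rw [hAstar]
    apply Finset.sum_eq_zero
    intro l hl
    have hlτ : l < τs ω := lt_of_lt_of_le (Finset.mem_range.mp hl) hr
    have hlJ : l < J := lt_of_lt_of_le hlτ (hτ_le ω)
    have hZC := (hτs ω).2.2 l hlτ
    have hYl := hY l hlJ ω
    rw [show (μ[Y (l + 1) | ℱ l]) = C l from (hC l hlJ).symm] at hYl ⊢
    rw [hYl, max_eq_right (le_of_lt hZC), sub_self]
  -- `Y = Z` at `τ⋆`
  have hYτ : ∀ ω, Y (τs ω) ω = Z (τs ω) ω := by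
    intro ω
    rcases eq_or_lt_of_le (hτ_le ω) with h | h
    · rw [h]; exact hYJ ω
    · have h1 := hY (τs ω) h ω
      rw [show (μ[Y (τs ω + 1) | ℱ (τs ω)]) = C (τs ω) from (hC _ h).symm] at h1
      rw [h1, max_eq_left (hτs ω).2.1]
  -- `τ⋆` is a stopping time
  have hτ_st : IsStoppingTime ℱ (fun ω => (τs ω : WithTop ℕ)) := by
    intro i
    have hcoe : {ω | (τs ω : WithTop ℕ) ≤ (i : WithTop ℕ)} = {ω | τs ω ≤ i} := by
      ext ω; simp only [Set.mem_setOf_eq]; exact_mod_cast Iff.rfl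
    show MeasurableSet[ℱ i] {ω | (τs ω : WithTop ℕ) ≤ (i : WithTop ℕ)}
    rw [hcoe]
    by_cases hiJ : J ≤ i
    · have : {ω | τs ω ≤ i} = Set.univ :=
        Set.eq_univ_of_forall fun ω => le_trans (hτ_le ω) hiJ
      rw [this]; exact MeasurableSet.univ
    · push_neg at hiJ
      have hset : {ω | τs ω ≤ i} = ⋃ k ∈ Set.Iio (i + 1), {ω | C k ω ≤ Z k ω} := by
        ext ω
        simp only [Set.mem_setOf_eq, Set.mem_iUnion, Set.mem_Iio, exists_prop]
        constructor
        · intro h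
          exact ⟨τs ω, by omega, (hτs ω).2.1⟩
        · rintro ⟨k, hk, hCZ⟩
          by_contra hlt
          push_neg at hlt
          exact absurd hCZ (not_le.mpr ((hτs ω).2.2 k (by omega)))
      rw [hset]
      refine MeasurableSet.biUnion (Set.to_countable _) ?_
      intro k hk
      have hki : k ≤ i := by
        simp only [Set.mem_Iio] at hk; omega
      have hkJ : k ≤ J := le_trans hki (le_of_lt hiJ)
      exact ℱ.mono hki _
        (measurableSet_le ((hCm k hkJ).measurable) (hZ_adapted k))
  -- optional sampling helper
  have hOS : ∀ (j : ℕ) (T : Ω → ℕ), IsStoppingTime ℱ (fun ω => (T ω : WithTop ℕ)) → (∀ ω, j ≤ T ω) → (∀ ω, T ω ≤ J) →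
      μ[stoppedValue S (fun ω => (T ω : WithTop ℕ)) | ℱ j] =ᵐ[μ] S j := by
    intro j T hT hjT hTJ
    have h := hS.stoppedValue_ae_eq_condExp_of_le hT (isStoppingTime_const ℱ j)
      (fun ω => WithTop.coe_le_coe.mpr (hjT ω)) (fun ω => WithTop.coe_le_coe.mpr (hTJ ω))
    rw [IsStoppingTime.measurableSpace_const] at h
    exact h.symm
  -- the function `g` and its finite supremum `G`
  set g : ℕ → Ω → ℝ := fun r ω => Z r ω - Y r ω - Astar r ω + S r ω with hg_def
  set G : Ω → ℝ := fun ω => (Finset.Icc 0 J).sup' hne (fun r => g r ω) with hG_def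
  -- the supremum identity
  have hsup : ∀ ω, (Finset.Icc 0 J).sup' hne (fun r => Z r ω - M r ω) = Y 0 ω + G ω := by
    intro ω
    have h1 : (fun r => Z r ω - M r ω) = fun r => Y 0 ω + g r ω := by
      funext r
      have hd := hDoob r ω
      rw [hMdef]
      simp only [hg_def]
      linarith
    rw [h1, hG_def]
    exact (Finset.comp_sup'_eq_sup'_comp hne (fun x => Y 0 ω + x)
      (fun x y => by simp [max_add_add_left])).symm
  -- integrability of `Astar`, `g` and `G`
  have hA_int : ∀ r, r ≤ J → Integrable (Astar r) μ := by
    intro r hr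
    have : Astar r = fun ω => ∑ l ∈ Finset.range r, (Y l ω - (μ[Y (l + 1) | ℱ l]) ω) :=
      funext (hAstar r)
    rw [this]
    apply integrable_finset_sum
    intro l hl
    have hlJ : l ≤ J := le_trans (le_of_lt (Finset.mem_range.mp hl)) hr
    exact (hYi l hlJ).sub integrable_condExp
  have hg_int : ∀ r, r ≤ J → Integrable (g r) μ := by
    intro r hr
    exact (((hZ_int r).sub (hYi r hr)).sub (hA_int r hr)).add (hS.integrable r)
  have hG_int : Integrable G μ := by
    have hGeq : G = (Finset.Icc 0 J).sup' hne g := by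
      funext ω
      rw [hG_def, Finset.sup'_apply]
    rw [hGeq]
    refine Finset.sup'_induction (p := fun φ : Ω → ℝ => Integrable φ μ) hne g (fun a ha b hb => ha.sup hb) ?_
    intro b hb
    exact hg_int b (Finset.mem_Icc.mp hb).2
  -- `G ≥ stoppedValue S (fun ω => (τs ω : WithTop ℕ))` pointwise
  have hsvτ : ∀ ω, stoppedValue S (fun ω => (τs ω : WithTop ℕ)) ω = S (τs ω) ω := fun ω => rfl
  have hGge : ∀ ω, stoppedValue S (fun ω => (τs ω : WithTop ℕ)) ω ≤ G ω := by
    intro ω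
    have hmem : τs ω ∈ Finset.Icc 0 J := Finset.mem_Icc.mpr ⟨Nat.zero_le _, hτ_le ω⟩
    have hle := Finset.le_sup' (fun r => g r ω) hmem
    have hgτ : g (τs ω) ω = S (τs ω) ω := by
      simp only [hg_def, hYτ ω, hAτ ω (τs ω) le_rfl]
      ring
    rw [hG_def]
    calc stoppedValue S (fun ω => (τs ω : WithTop ℕ)) ω = g (τs ω) ω := by rw [hgτ]; rfl
    _ ≤ _ := hle
  -- conditional expectation of the supremum
  have hsplit : (μ[fun ω => (Finset.Icc 0 J).sup' hne (fun r => Z r ω - M r ω) | ℱ 0])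
      =ᵐ[μ] fun ω => Y 0 ω + (μ[G | ℱ 0]) ω := by
    have h1 : (fun ω => (Finset.Icc 0 J).sup' hne (fun r => Z r ω - M r ω)) = Y 0 + G :=
      funext hsup
    rw [h1]
    have h2 := condExp_add (m := ℱ 0) (μ := μ) (hYi 0 (Nat.zero_le J)) hG_int
    have h3 : μ[Y 0 | ℱ 0] = Y 0 :=
      condExp_of_stronglyMeasurable (ℱ.le 0) (hYm 0 (Nat.zero_le J)) (hYi 0 (Nat.zero_le J))
    filter_upwards [h2] with ω hω
    rw [hω, Pi.add_apply, h3]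
  -- stoppedValue integrability and conditional expectation at time 0
  have hSV_int : Integrable (stoppedValue S (fun ω => (τs ω : WithTop ℕ))) μ :=
    integrable_stoppedValue ℕ hτ_st hS.integrable (fun ω => WithTop.coe_le_coe.mpr (hτ_le ω))
  have hOS0 : (μ[stoppedValue S (fun ω => (τs ω : WithTop ℕ)) | ℱ 0]) =ᵐ[μ] 0 := by
    filter_upwards [hOS 0 τs hτ_st (fun ω => Nat.zero_le _) hτ_le] with ω hω
    simp [hω, hS0 ω]
  -- chain of equivalences
  have hiff0 : (Y 0 =ᵐ[μ] μ[fun ω => (Finset.Icc 0 J).sup' hne (fun r => Z r ω - M r ω) | ℱ 0])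
      ↔ (μ[G | ℱ 0] =ᵐ[μ] 0) := by
    constructor
    · intro h
      have := h.trans hsplit
      filter_upwards [this] with ω hω
      simp only [Pi.zero_apply]
      linarith [hω]
    · intro h
      refine Filter.EventuallyEq.trans ?_ hsplit.symm
      filter_upwards [h] with ω hω
      rw [hω, Pi.zero_apply]
      ring
  have hiff1 : (μ[G | ℱ 0] =ᵐ[μ] 0) ↔ (G =ᵐ[μ] stoppedValue S (fun ω => (τs ω : WithTop ℕ))) := by
    constructor
    · intro h
      have hD_int : Integrable (fun ω => G ω - stoppedValue S (fun ω => (τs ω : WithTop ℕ)) ω) μ := hG_int.sub hSV_int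
      have hcond : (μ[fun ω => G ω - stoppedValue S (fun ω => (τs ω : WithTop ℕ)) ω | ℱ 0]) =ᵐ[μ] 0 := by
        have hsub := condExp_sub (m := ℱ 0) (μ := μ) hG_int hSV_int
        have : (fun ω => G ω - stoppedValue S (fun ω => (τs ω : WithTop ℕ)) ω) = G - stoppedValue S (fun ω => (τs ω : WithTop ℕ)) := rfl
        rw [this]
        filter_upwards [hsub, h, hOS0] with ω h1 h2 h3
        simp [h1, h2, h3]
      have hint : ∫ ω, (G ω - stoppedValue S (fun ω => (τs ω : WithTop ℕ)) ω) ∂μ = 0 := by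
        rw [← integral_condExp (ℱ.le 0), integral_congr_ae hcond]
        simp
      have hnn : 0 ≤ᵐ[μ] fun ω => G ω - stoppedValue S (fun ω => (τs ω : WithTop ℕ)) ω :=
        Filter.Eventually.of_forall fun ω => sub_nonneg.mpr (hGge ω)
      have hzero := (integral_eq_zero_iff_of_nonneg_ae hnn hD_int).mp hint
      filter_upwards [hzero] with ω hω
      have : G ω - stoppedValue S (fun ω => (τs ω : WithTop ℕ)) ω = 0 := hω
      linarith
    · intro h
      exact (condExp_congr_ae h).trans hOS0
  rw [hiff0, hiff1]
  -- remaining: `G =ᵐ stoppedValue S (fun ω => (τs ω : WithTop ℕ)) ↔ RHS`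
  constructor
  · -- forward: from `G = Sτ` a.e. derive (dd1) and (dd2)
    intro hGSV
    -- dd1 for each fixed pair (j, r)
    have hdd1 : ∀ j r, r < j → j ≤ J →
        ∀ᵐ ω ∂μ, j ≤ τs ω → Z r ω - Y r ω - S j ω + S r ω ≤ 0 := by
      intro j r hrj hjJ
      have hrJ : r ≤ J := le_trans (le_of_lt hrj) hjJ
      set A : Set Ω := {ω | j ≤ τs ω} with hA_def
      have hA : MeasurableSet[ℱ j] A := by
          have h : MeasurableSet[ℱ j] {ω | ((j : ℕ) : WithTop ℕ) ≤ (τs ω : WithTop ℕ)} :=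
            hτ_st.measurableSet_ge_of_countable j
          have he : {ω | ((j : ℕ) : WithTop ℕ) ≤ (τs ω : WithTop ℕ)} = A := by
            ext ω; simp only [hA_def, Set.mem_setOf_eq]; exact_mod_cast Iff.rfl
          rwa [he] at h
      set f : Ω → ℝ := fun ω => Z r ω - Y r ω + S r ω with hf_def
      have hf_meas : StronglyMeasurable[ℱ j] f := by
        refine StronglyMeasurable.mono ?_ (ℱ.mono (le_of_lt hrj))
        exact ((hZ_adapted r).stronglyMeasurable.sub (hYm r hrJ)).add (hS.stronglyAdapted r)
      have hf_int : Integrable f μ :=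
        ((hZ_int r).sub (hYi r hrJ)).add (hS.integrable r)
      set T : Ω → ℕ := fun ω => max (τs ω) j with hT_def
      have hT_st : IsStoppingTime ℱ (fun ω => (T ω : WithTop ℕ)) := by
          have h := hτ_st.max_const j
          intro i
          convert h i using 1
          ext ω
          simp [hT_def]
      have hjT : ∀ ω, j ≤ T ω := fun ω => le_max_right _ _
      have hTJ : ∀ ω, T ω ≤ J := fun ω => max_le (hτ_le ω) hjJ
      have hSVT_int : Integrable (stoppedValue S (fun ω => (T ω : WithTop ℕ))) μ :=
        integrable_stoppedValue ℕ hT_st hS.integrable (fun ω => WithTop.coe_le_coe.mpr (hTJ ω))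
      have hOSj := hOS j T hT_st hjT hTJ
      -- pointwise indicator inequality
      have hpt : A.indicator f ≤ᵐ[μ] A.indicator (stoppedValue S (fun ω => (T ω : WithTop ℕ))) := by
        filter_upwards [hGSV] with ω hω
        by_cases hmem : ω ∈ A
        · rw [Set.indicator_of_mem hmem, Set.indicator_of_mem hmem]
          have hjτ : j ≤ τs ω := hmem
          have hrτ : r < τs ω := lt_of_lt_of_le hrj hjτ
          have hmemIcc : r ∈ Finset.Icc 0 J := Finset.mem_Icc.mpr ⟨Nat.zero_le _, hrJ⟩
          have hle := Finset.le_sup' (fun r => g r ω) hmemIcc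
          have hA0 := hAτ ω r (le_of_lt hrτ)
          have hTω : T ω = τs ω := max_eq_left hjτ
          have hsv : stoppedValue S (fun ω => (T ω : WithTop ℕ)) ω = S (τs ω) ω := by
            show S (T ω) ω = _
            rw [hTω]
          rw [hsv]
          have hGω : G ω = stoppedValue S (fun ω => (τs ω : WithTop ℕ)) ω := hω
          have : g r ω ≤ G ω := hle
          simp only [hg_def, hA0] at this
          rw [hGω] at this
          simp only [hsvτ] at this
          simp only [hf_def]
          linarith
        · rw [Set.indicator_of_notMem hmem, Set.indicator_of_notMem hmem]
      have hAm : MeasurableSet A := ℱ.le j _ hA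
      have h1 : μ[A.indicator f | ℱ j] = A.indicator f :=
        condExp_of_stronglyMeasurable (ℱ.le j) (hf_meas.indicator hA) (hf_int.indicator hAm)
      have h2 : (μ[A.indicator (stoppedValue S (fun ω => (T ω : WithTop ℕ))) | ℱ j])
          =ᵐ[μ] A.indicator (μ[stoppedValue S (fun ω => (T ω : WithTop ℕ)) | ℱ j]) :=
        condExp_indicator hSVT_int hA
      have h3 := condExp_mono (m := ℱ j) (μ := μ)
        (hf_int.indicator hAm) (hSVT_int.indicator hAm) hpt
      filter_upwards [h2, h3, hOSj] with ω e2 e3 e4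
      intro hjτ
      have hmem : ω ∈ A := hjτ
      have t1 : (A.indicator f) ω = f ω := Set.indicator_of_mem hmem f
      have t2 : (A.indicator (μ[stoppedValue S (fun ω => (T ω : WithTop ℕ)) | ℱ j])) ω
          = (μ[stoppedValue S (fun ω => (T ω : WithTop ℕ)) | ℱ j]) ω := Set.indicator_of_mem hmem _
      rw [h1] at e3
      rw [e2, t1, t2, e4] at e3
      simp only [hf_def] at e3
      linarith
    -- combine
    have hdd1' : ∀ᵐ ω ∂μ, ∀ j r, (r < j ∧ j ≤ J) →
        (j ≤ τs ω → Z r ω - Y r ω - S j ω + S r ω ≤ 0) := by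
      rw [ae_all_iff]
      intro j
      rw [ae_all_iff]
      intro r
      by_cases hcond : r < j ∧ j ≤ J
      · filter_upwards [hdd1 j r hcond.1 hcond.2] with ω hω
        intro _; exact hω
      · exact Filter.Eventually.of_forall fun ω h => absurd h hcond
    filter_upwards [hGSV, hdd1'] with ω hω hω1
    constructor
    · intro j hjJ hjτ r hrj
      exact hω1 j r ⟨hrj, hjJ⟩ hjτ
    · intro j hjJ hτj
      have hmem : j ∈ Finset.Icc 0 J := Finset.mem_Icc.mpr ⟨Nat.zero_le _, hjJ⟩
      have hle : g j ω ≤ G ω := Finset.le_sup' (fun r => g r ω) hmem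
      rw [hω] at hle
      simp only [hg_def, hsvτ] at hle
      linarith
  · -- backward: RHS implies `G = Sτ` a.e.
    intro hRHS
    filter_upwards [hRHS] with ω hω
    obtain ⟨h1, h2⟩ := hω
    refine le_antisymm ?_ (hGge ω)
    rw [hG_def]
    refine Finset.sup'_le hne _ ?_
    intro r hr
    have hrJ : r ≤ J := (Finset.mem_Icc.mp hr).2
    rcases lt_trichotomy r (τs ω) with hlt | heq | hgt
    · have := h1 (τs ω) (hτ_le ω) le_rfl r hlt
      have hA0 := hAτ ω r (le_of_lt hlt)
      simp only [hg_def, hA0, hsvτ]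
      linarith
    · simp only [hg_def, heq, hYτ ω, hAτ ω (τs ω) le_rfl, hsvτ]
      ring_nf
      exact le_rfl
    · have := h2 r hrJ hgt
      simp only [hg_def, hsvτ]
      linarith
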